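/- Under the same hypotheses (q-deformed Bannai–Ito algebra relations), I₃² I₁ + (q + q^{−1}) I₃ I₁ I₃ + I₁ I₃² = I₁ + (q^{1/2} + q^{−1/2}) ι₂ I₃ + ι₁. -/
import Mathlib

theorem stmt_7 (q : ℝ) (hq : 0 < q) {A : Type*} [Ring A] [Algebra ℂ A]
    (I₁ I₂ I₃ : A) (ι₁ ι₂ ι₃ : ℂ)
    (h12 : ((Real.sqrt q : ℝ) : ℂ) • (I₁ * I₂) + (((Real.sqrt q : ℝ) : ℂ))⁻¹ • (I₂ * I₁)
      = I₃ + ι₃ • (1 : A))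
    (h23 : ((Real.sqrt q : ℝ) : ℂ) • (I₂ * I₃) + (((Real.sqrt q : ℝ) : ℂ))⁻¹ • (I₃ * I₂)
      = I₁ + ι₁ • (1 : A))
    (h31 : ((Real.sqrt q : ℝ) : ℂ) • (I₃ * I₁) + (((Real.sqrt q : ℝ) : ℂ))⁻¹ • (I₁ * I₃)
      = I₂ + ι₂ • (1 : A)) :
    I₃ ^ 2 * I₁ + ((q + q⁻¹ : ℝ) : ℂ) • (I₃ * I₁ * I₃) + I₁ * I₃ ^ 2
      = I₁ + (((Real.sqrt q + (Real.sqrt q)⁻¹ : ℝ) : ℂ) * ι₂) • I₃ + ι₁ • (1 : A) := by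
  set s : ℂ := ((Real.sqrt q : ℝ) : ℂ) with hs
  have hsr : Real.sqrt q ≠ 0 := by positivity
  have hs0 : s ≠ 0 := by simpa [hs] using hsr
  have hss : s * s = (q : ℂ) := by
    rw [hs]; norm_cast; exact Real.mul_self_sqrt hq.le
  have key : s⁻¹ • (I₃ * (s • (I₃*I₁) + s⁻¹ • (I₁*I₃))) + s • ((s • (I₃*I₁) + s⁻¹ • (I₁*I₃)) * I₃)
      = s⁻¹ • (I₃ * (I₂ + ι₂ • 1)) + s • ((I₂ + ι₂ • 1) * I₃) := by rw [h31]
  have expand : s⁻¹ • (I₃ * (s • (I₃*I₁) + s⁻¹ • (I₁*I₃))) + s • ((s • (I₃*I₁) + s⁻¹ • (I₁*I₃)) * I₃)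
      = I₃ ^ 2 * I₁ + ((q + q⁻¹ : ℝ) : ℂ) • (I₃ * I₁ * I₃) + I₁ * I₃ ^ 2 := by
    have e1 : I₃ * (I₃ * I₁) = I₃ ^ 2 * I₁ := by rw [pow_two, mul_assoc]
    have e2 : I₁ * I₃ * I₃ = I₁ * I₃ ^ 2 := by rw [pow_two, mul_assoc]
    have hc : (s⁻¹ * s⁻¹ + s * s) = ((q + q⁻¹ : ℝ) : ℂ) := by
      rw [← mul_inv, hss]; push_cast; ring
    simp only [mul_add, add_mul, mul_smul_comm, smul_mul_assoc, smul_add, smul_smul,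
      ← mul_assoc I₃ I₁ I₃, e1, e2, inv_mul_cancel₀ hs0, mul_inv_cancel₀ hs0, one_smul]
    rw [add_assoc, ← add_assoc ((s⁻¹ * s⁻¹) • (I₃ * I₁ * I₃)), ← add_smul, hc, ← add_assoc]
  have rhs : s⁻¹ • (I₃ * (I₂ + ι₂ • 1)) + s • ((I₂ + ι₂ • 1) * I₃)
      = I₁ + (((Real.sqrt q + (Real.sqrt q)⁻¹ : ℝ) : ℂ) * ι₂) • I₃ + ι₁ • (1 : A) := by
    simp only [mul_add, add_mul, mul_smul_comm, smul_mul_assoc, smul_add, smul_smul,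
      mul_one, one_mul]
    have hco : ((Real.sqrt q + (Real.sqrt q)⁻¹ : ℝ) : ℂ) * ι₂ = s⁻¹ * ι₂ + s * ι₂ := by
      push_cast [hs]; ring
    have h23' : I₁ = s • (I₂ * I₃) + s⁻¹ • (I₃ * I₂) - ι₁ • (1 : A) := by
      rw [h23]; abel
    rw [hco, h23', add_smul]
    abel
  rw [← expand, key, rhs]
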